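/- Let (J, m) be a laminar MaxT instance with p_j ≤ λ·|χ_j| for every j ∈ J, where λ ∈ (0,1), and let ω be a real number with 0 ≤ ω ≤ 1/2 − λ·(1/2 + 1/m). If a subset S ⊆ J satisfies, for every interval χ ∈ {χ_j : j ∈ J}, Σ_{j∈S : χ_j ⊆ χ} a_j ≤ (ω + λ/m)·m·|χ|, then S is feasibly schedulable on the m hosts. -/

import Mathlib

open Finset

/-- A subset `S` of jobs is feasibly schedulable on `m` identical hosts:
for each job `j ∈ S` one can pick a set of exactly `p j` time slots inside its
time window `[r j, d j]` and a host for each chosen slot, so that at every host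
and every time slot, the total size of jobs running there is at most `1`. -/
def Schedulable {ι : Type*} (m : ℕ) (r d : ι → ℤ) (p : ι → ℕ) (s : ι → ℝ)
    (S : Finset ι) : Prop :=
  ∃ (Tj : ι → Finset ℤ) (h : ι → ℤ → Fin m),
    (∀ j ∈ S, Tj j ⊆ Finset.Icc (r j) (d j) ∧ (Tj j).card = p j) ∧
    ∀ (i : Fin m) (t : ℤ),
      ∑ j ∈ S.filter (fun j => t ∈ Tj j ∧ h j t = i), s j ≤ 1

/-- The family of time windows `{[r j, d j] : j}` is laminar. -/
def LaminarWindows {ι : Type*} (r d : ι → ℤ) : Prop :=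
  ∀ j k : ι,
    Finset.Icc (r j) (d j) ⊆ Finset.Icc (r k) (d k) ∨
    Finset.Icc (r k) (d k) ⊆ Finset.Icc (r j) (d j) ∨
    Disjoint (Finset.Icc (r j) (d j)) (Finset.Icc (r k) (d k))


open Finset

namespace SchedAux

variable {ι : Type*} [DecidableEq ι]

/-- First-fit: items of size ≤ 1/2 can be added to K bins with initial loads g
    (each in [0,1]) as long as the grand total is at most (K+1)/2. -/
lemma ff_lemma (s : ι → ℝ) (K : ℕ) (hK : 1 ≤ K) (X : Finset ι) :
    ∀ g : Fin K → ℝ, (∀ i, 0 ≤ g i) → (∀ i, g i ≤ 1) →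
    (∀ a ∈ X, 0 < s a ∧ s a ≤ 1/2) →
    ((∑ i, g i) + ∑ a ∈ X, s a ≤ (K + 1)/2) →
    ∃ f : ι → Fin K, ∀ i, g i + ∑ a ∈ X.filter (fun a => f a = i), s a ≤ 1 := by
  induction X using Finset.induction_on with
  | empty =>
      intro g hg0 hg1 _ _
      exact ⟨fun _ => ⟨0, hK⟩, fun i => by simpa using hg1 i⟩
  | @insert a X ha IH =>
      intro g hg0 hg1 hX hsum
      have hsa : 0 < s a ∧ s a ≤ 1/2 := hX a (mem_insert_self a X)
      have hXs : ∀ b ∈ X, 0 < s b ∧ s b ≤ 1/2 := fun b hb => hX b (mem_insert_of_mem hb)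
      have hXnn : (0:ℝ) ≤ ∑ b ∈ X, s b :=
        Finset.sum_nonneg fun b hb => (hXs b hb).1.le
      have hsum' : (∑ i, g i) + s a + ∑ b ∈ X, s b ≤ (K + 1)/2 := by
        rw [Finset.sum_insert ha] at hsum; linarith
      -- find a bin that accommodates a
      have hbin : ∃ i₀ : Fin K, g i₀ + s a ≤ 1 := by
        by_contra hcon
        push_neg at hcon
        have h2 : (K : ℝ) * (1 - s a) < ∑ i, g i := by
          have : ∑ _i : Fin K, (1 - s a) < ∑ i, g i := by
            apply Finset.sum_lt_sum_of_nonempty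
            · exact Finset.univ_nonempty_iff.mpr ⟨⟨0, hK⟩⟩
            · intro i _; linarith [hcon i]
          simpa [Finset.sum_const, Finset.card_univ, nsmul_eq_mul, mul_sub] using this
        have hK1 : (1:ℝ) ≤ (K:ℝ) := by exact_mod_cast hK
        nlinarith [hsa.1, hsa.2]
      obtain ⟨i₀, hi₀⟩ := hbin
      set g' : Fin K → ℝ := Function.update g i₀ (g i₀ + s a) with hg'
      have hg'0 : ∀ i, 0 ≤ g' i := by
        intro i
        by_cases h : i = i₀
        · subst h; simp [hg', Function.update_self]; linarith [hg0 i, hsa.1]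
        · simp [hg', Function.update_of_ne h]; exact hg0 i
      have hg'1 : ∀ i, g' i ≤ 1 := by
        intro i
        by_cases h : i = i₀
        · subst h; simpa [hg', Function.update_self] using hi₀
        · simpa [hg', Function.update_of_ne h] using hg1 i
      have hg'sum : (∑ i, g' i) + ∑ b ∈ X, s b ≤ (K + 1)/2 := by
        have : ∑ i, g' i = (∑ i, g i) + s a := by
          rw [hg', Finset.sum_update_of_mem (Finset.mem_univ i₀)]
          rw [Finset.sum_eq_sum_sdiff_singleton_add (Finset.mem_univ i₀) g]
          ring
        rw [this]; linarith
      obtain ⟨f', hf'⟩ := IH g' hg'0 hg'1 hXs hg'sum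
      refine ⟨fun y => if y = a then i₀ else f' y, fun i => ?_⟩
      have hfilt : ∀ (i : Fin K),
          X.filter (fun y => (if y = a then i₀ else f' y) = i) = X.filter (fun y => f' y = i) := by
        intro i
        apply Finset.filter_congr
        intro y hy
        have : y ≠ a := fun h => ha (h ▸ hy)
        simp [this]
      by_cases h : i = i₀
      · subst h
        rw [Finset.filter_insert,
          if_pos (show (if a = a then i else f' a) = i by simp),
          Finset.sum_insert (by simp [ha]), hfilt]
        have := hf' i
        rw [hg', Function.update_self] at this
        linarith
      · rw [Finset.filter_insert,
          if_neg (show ¬ ((if a = a then i₀ else f' a) = i) by simpa using Ne.symm h),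
          hfilt]
        have := hf' i
        rw [hg', Function.update_of_ne h] at this
        linarith


/-- Any finite collection of items with sizes in (0,1] and total at most (K+1)/2
    can be packed into K unit bins. -/
lemma bins_lemma (s : ι → ℝ) : ∀ (K : ℕ), 1 ≤ K → ∀ X : Finset ι,
    (∀ a ∈ X, 0 < s a ∧ s a ≤ 1) →
    (∑ a ∈ X, s a ≤ (K + 1)/2) →
    ∃ f : ι → Fin K, ∀ i, ∑ a ∈ X.filter (fun a => f a = i), s a ≤ 1 := by
  intro K
  induction K with
  | zero => omega
  | succ k IHk =>
    intro _ X hX hsum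
    by_cases hk : k = 0
    · -- single bin : everything fits since total ≤ 1
      subst hk
      refine ⟨fun _ => ⟨0, by omega⟩, fun i => ?_⟩
      have hi : (⟨0, by omega⟩ : Fin 1) = i := Subsingleton.elim _ _
      have : X.filter (fun a => (⟨0, by omega⟩ : Fin 1) = i) = X := by simp [hi]
      rw [this]; norm_num at hsum ⊢; linarith
    · have hk1 : 1 ≤ k := by omega
      by_cases hbig : ∃ b ∈ X, 1/2 < s b
      · obtain ⟨b, hbX, hb⟩ := hbig
        have hsum' : ∑ a ∈ X.erase b, s a ≤ (k + 1)/2 := by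
          have := Finset.add_sum_erase X s hbX
          push_cast
          push_cast at hsum
          linarith
        obtain ⟨f', hf'⟩ := IHk hk1 (X.erase b)
          (fun a haa => hX a (Finset.mem_of_mem_erase haa)) hsum'
        refine ⟨fun y => if y = b then Fin.last k else (f' y).castSucc, fun i => ?_⟩
        induction i using Fin.lastCases with
        | last =>
          have heq : X.filter (fun y => (if y = b then Fin.last k else (f' y).castSucc) = Fin.last k)
              = {b} := by
            ext y
            simp only [Finset.mem_filter, Finset.mem_singleton]
            constructor
            · rintro ⟨hy, hfy⟩
              by_contra hne
              rw [if_neg hne] at hfy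
              exact absurd hfy (Fin.castSucc_lt_last (f' y)).ne
            · rintro rfl; exact ⟨hbX, by simp⟩
          rw [heq, Finset.sum_singleton]
          exact (hX b hbX).2
        | cast j =>
          have heq : X.filter (fun y => (if y = b then Fin.last k else (f' y).castSucc) = j.castSucc)
              = (X.erase b).filter (fun y => f' y = j) := by
            ext y
            simp only [Finset.mem_filter, Finset.mem_erase]
            constructor
            · rintro ⟨hy, hfy⟩
              by_cases hyb : y = b
              · rw [if_pos hyb] at hfy
                exact absurd hfy.symm (Fin.castSucc_lt_last j).ne
              · rw [if_neg hyb] at hfy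
                exact ⟨⟨hyb, hy⟩, Fin.castSucc_inj.mp hfy⟩
            · rintro ⟨⟨hyb, hy⟩, hfy⟩
              exact ⟨hy, by rw [if_neg hyb, hfy]⟩
          rw [heq]
          exact hf' j
      · push_neg at hbig
        obtain ⟨f, hf⟩ := ff_lemma s (k+1) (by omega) X (fun _ => 0)
          (fun _ => le_refl 0) (fun _ => by norm_num)
          (fun a haX => ⟨(hX a haX).1, hbig a haX⟩)
          (by simpa using hsum)
        exact ⟨f, fun i => by have := hf i; simpa using this⟩


/-- Per-slot packing: if there is an element x such that the rest totals ≤ m/2,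
    everything packs into m ≥ 2 unit bins. -/
lemma pack_lemma (s : ι → ℝ) (m : ℕ) (hm : 2 ≤ m) (X : Finset ι)
    (hX : ∀ a ∈ X, 0 < s a ∧ s a ≤ 1)
    (hw : X = ∅ ∨ ∃ x ∈ X, (∑ a ∈ X, s a) - s x ≤ m/2) :
    ∃ f : ι → Fin m, ∀ i, ∑ a ∈ X.filter (fun a => f a = i), s a ≤ 1 := by
  rcases hw with h | ⟨x, hxX, hx⟩
  · subst h
    exact ⟨fun _ => ⟨0, by omega⟩, fun i => by simp⟩
  · have hsum' : ∑ a ∈ X.erase x, s a ≤ ((m - 1 : ℕ) + 1)/2 := by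
      have h1 := Finset.add_sum_erase X s hxX
      have h2 : ((m - 1 : ℕ) : ℝ) + 1 = (m : ℝ) := by
        have h3 : (1:ℕ) ≤ m := by omega
        push_cast [Nat.cast_sub h3]
        ring
      rw [h2]
      linarith
    obtain ⟨f', hf'⟩ := bins_lemma s (m - 1) (by omega) (X.erase x)
      (fun a haa => hX a (Finset.mem_of_mem_erase haa)) hsum'
    have hlt : m - 1 < m := by omega
    have hle : m - 1 ≤ m := by omega
    classical
    refine ⟨fun y => if y = x then ⟨m - 1, hlt⟩ else Fin.castLE hle (f' y), fun i => ?_⟩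
    by_cases hi : i = (⟨m - 1, hlt⟩ : Fin m)
    · subst hi
      have heq : X.filter
          (fun y => (if y = x then (⟨m - 1, hlt⟩ : Fin m) else Fin.castLE hle (f' y)) = ⟨m - 1, hlt⟩)
          = {x} := by
        ext y
        simp only [Finset.mem_filter, Finset.mem_singleton]
        constructor
        · rintro ⟨hy, hfy⟩
          by_contra hne
          rw [if_neg hne] at hfy
          have h4 : ((f' y : ℕ)) = m - 1 := by
            simpa [Fin.ext_iff] using hfy
          have h5 := (f' y).isLt
          omega
        · rintro rfl
          exact ⟨hxX, by simp⟩
      calc ∑ a ∈ X.filter (fun y =>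
              (if y = x then (⟨m - 1, hlt⟩ : Fin m) else Fin.castLE hle (f' y)) = ⟨m - 1, hlt⟩), s a
          = ∑ a ∈ ({x} : Finset ι), s a := by rw [heq]
        _ ≤ 1 := by rw [Finset.sum_singleton]; exact (hX x hxX).2
    · have hival : (i : ℕ) < m - 1 := by
        by_contra hcon
        apply hi
        apply Fin.ext
        show (i : ℕ) = m - 1
        have := i.isLt
        omega
      have heq : X.filter
          (fun y => (if y = x then (⟨m - 1, hlt⟩ : Fin m) else Fin.castLE hle (f' y)) = i)
          = (X.erase x).filter (fun y => f' y = ⟨(i : ℕ), hival⟩) := by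
        ext y
        simp only [Finset.mem_filter, Finset.mem_erase]
        constructor
        · rintro ⟨hy, hfy⟩
          by_cases hyx : y = x
          · rw [if_pos hyx] at hfy
            exact absurd hfy (by simp [Fin.ext_iff]; omega)
          · rw [if_neg hyx] at hfy
            refine ⟨⟨hyx, hy⟩, ?_⟩
            have h6 : ((f' y : ℕ)) = (i : ℕ) := by simpa [Fin.ext_iff] using hfy
            exact Fin.ext h6
        · rintro ⟨⟨hyx, hy⟩, hfy⟩
          refine ⟨hy, ?_⟩
          rw [if_neg hyx]
          have h7 : ((f' y : ℕ)) = (i : ℕ) := by rw [hfy]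
          exact Fin.ext h7
      calc ∑ a ∈ X.filter
              (fun y => (if y = x then (⟨m - 1, hlt⟩ : Fin m) else Fin.castLE hle (f' y)) = i), s a
          = ∑ a ∈ (X.erase x).filter (fun y => f' y = ⟨(i : ℕ), hival⟩), s a := by rw [heq]
        _ ≤ 1 := hf' _


section Core

variable {ι : Type*} [DecidableEq ι]
variable (r d : ι → ℤ) (p : ι → ℕ) (s : ι → ℝ) (S : Finset ι)

/-- Total size of jobs (of `S`) scheduled at slot `t` under assignment `T`. -/
noncomputable def load (T : ι → Finset ℤ) (t : ℤ) : ℝ :=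
  ∑ k ∈ S, if t ∈ T k then s k else 0

lemma load_nonneg (hs0 : ∀ j, 0 < s j) (T : ι → Finset ℤ) (t : ℤ) :
    0 ≤ load s S T t := by
  apply Finset.sum_nonneg
  intro k _
  by_cases h : t ∈ T k <;> simp [h, (hs0 k).le]

lemma load_update (T : ι → Finset ℤ) (j : ι) (hjS : j ∈ S) (hTj : T j = ∅)
    (A : Finset ℤ) (t : ℤ) :
    load s S (Function.update T j A) t = load s S T t + (if t ∈ A then s j else 0) := by
  unfold load
  rw [← Finset.add_sum_erase _ _ hjS, ← Finset.add_sum_erase _ _ hjS]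
  have h1 : ∑ k ∈ S.erase j, (if t ∈ Function.update T j A k then s k else 0)
      = ∑ k ∈ S.erase j, (if t ∈ T k then s k else 0) := by
    apply Finset.sum_congr rfl
    intro k hk
    rw [Function.update_of_ne (Finset.ne_of_mem_erase hk)]
  rw [h1, Function.update_self, hTj]
  simp only [Finset.notMem_empty, if_false]
  ring

lemma win_cases
    (hlamin : ∀ j k : ι, Finset.Icc (r j) (d j) ⊆ Finset.Icc (r k) (d k) ∨
      Finset.Icc (r k) (d k) ⊆ Finset.Icc (r j) (d j) ∨
      Disjoint (Finset.Icc (r j) (d j)) (Finset.Icc (r k) (d k)))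
    {k j : ι} (hsize : d k - r k ≤ d j - r j) :
    Finset.Icc (r k) (d k) ⊆ Finset.Icc (r j) (d j) ∨
      Disjoint (Finset.Icc (r k) (d k)) (Finset.Icc (r j) (d j)) := by
  have hcard : (Finset.Icc (r k) (d k)).card ≤ (Finset.Icc (r j) (d j)).card := by
    rw [Int.card_Icc, Int.card_Icc]
    apply Int.toNat_le_toNat
    omega
  rcases hlamin k j with h | h | h
  · exact Or.inl h
  · have : Finset.Icc (r j) (d j) = Finset.Icc (r k) (d k) :=
      Finset.eq_of_subset_of_card_le h hcard
    exact Or.inl (this ▸ Finset.Subset.refl _)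
  · exact Or.inr h

lemma card_win (j : ι) (hrd : r j ≤ d j) :
    ((Finset.Icc (r j) (d j)).card : ℝ) = ((d j - r j + 1 : ℤ) : ℝ) := by
  rw [Int.card_Icc]
  have h : (0:ℤ) ≤ d j + 1 - r j := by omega
  rw [show d j + 1 - r j = d j - r j + 1 by ring] at h ⊢
  rw [← Int.cast_natCast, Int.toNat_of_nonneg h]

/-- Mass bound: total load in a maximal window is controlled by the jobs inside it. -/
lemma mass_le (hs0 : ∀ j, 0 < s j)
    (T : ι → Finset ℤ) (P : Finset ι) (hPS : P ⊆ S)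
    (hsub : ∀ k ∈ P, T k ⊆ Finset.Icc (r k) (d k))
    (hcard : ∀ k ∈ P, (T k).card = p k)
    (hempty : ∀ k, k ∉ P → T k = ∅)
    (j : ι) (hjS : j ∈ S) (hjP : j ∉ P)
    (hwd : ∀ k ∈ P, Finset.Icc (r k) (d k) ⊆ Finset.Icc (r j) (d j) ∨
      Disjoint (Finset.Icc (r k) (d k)) (Finset.Icc (r j) (d j))) :
    (∑ t ∈ Finset.Icc (r j) (d j), load s S T t) + (p j : ℝ) * s j
      ≤ ∑ k ∈ S.filter (fun k => Finset.Icc (r k) (d k) ⊆ Finset.Icc (r j) (d j)),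
          (p k : ℝ) * s k := by
  classical
  set W := Finset.Icc (r j) (d j) with hW
  have hswap : ∑ t ∈ W, load s S T t
      = ∑ k ∈ S, ((W.filter (fun t => t ∈ T k)).card : ℝ) * s k := by
    unfold load
    rw [Finset.sum_comm]
    apply Finset.sum_congr rfl
    intro k _
    rw [← Finset.sum_filter, Finset.sum_const, nsmul_eq_mul]
  set Q := P.filter (fun k => Finset.Icc (r k) (d k) ⊆ W) with hQ
  have hzero : ∀ k ∈ S, k ∉ Q → ((W.filter (fun t => t ∈ T k)).card : ℝ) * s k = 0 := by
    intro k _ hkQ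
    by_cases hkP : k ∈ P
    · have hnd : Disjoint (Finset.Icc (r k) (d k)) W := by
        rcases hwd k hkP with h | h
        · exact absurd (Finset.mem_filter.mpr ⟨hkP, h⟩) hkQ
        · exact h
      have : W.filter (fun t => t ∈ T k) = ∅ := by
        apply Finset.filter_false_of_mem
        intro t htW htT
        exact (Finset.disjoint_right.mp hnd htW) (hsub k hkP htT)
      rw [this]
      simp
    · rw [hempty k hkP]
      simp
  have hQsum : ∑ t ∈ W, load s S T t = ∑ k ∈ Q, ((W.filter (fun t => t ∈ T k)).card : ℝ) * s k := by
    rw [hswap]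
    apply (Finset.sum_subset (Finset.Subset.trans (Finset.filter_subset _ _) hPS) ?_).symm
    intro k hk hkQ
    exact hzero k hk hkQ
  have hQle : ∑ k ∈ Q, ((W.filter (fun t => t ∈ T k)).card : ℝ) * s k
      ≤ ∑ k ∈ Q, (p k : ℝ) * s k := by
    apply Finset.sum_le_sum
    intro k hk
    have hkP : k ∈ P := Finset.mem_of_mem_filter k hk
    have h1 : (W.filter (fun t => t ∈ T k)).card ≤ (T k).card := by
      apply Finset.card_le_card
      intro t ht
      exact (Finset.mem_filter.mp ht).2
    have h2 : ((W.filter (fun t => t ∈ T k)).card : ℝ) ≤ (p k : ℝ) := by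
      rw [← hcard k hkP]
      exact_mod_cast h1
    exact mul_le_mul_of_nonneg_right h2 (hs0 k).le
  have hins : (∑ k ∈ Q, (p k : ℝ) * s k) + (p j : ℝ) * s j
      = ∑ k ∈ insert j Q, (p k : ℝ) * s k := by
    rw [Finset.sum_insert (fun hjQ => hjP (Finset.mem_of_mem_filter j hjQ))]
    ring
  have hsubQ : insert j Q ⊆ S.filter (fun k => Finset.Icc (r k) (d k) ⊆ W) := by
    intro k hk
    rcases Finset.mem_insert.mp hk with rfl | hk
    · exact Finset.mem_filter.mpr ⟨hjS, by rw [hW]⟩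
    · obtain ⟨hkP, hkW⟩ := Finset.mem_filter.mp hk
      exact Finset.mem_filter.mpr ⟨hPS hkP, hkW⟩
  calc (∑ t ∈ W, load s S T t) + (p j : ℝ) * s j
      = (∑ k ∈ Q, ((W.filter (fun t => t ∈ T k)).card : ℝ) * s k) + (p j : ℝ) * s j := by
        rw [hQsum]
    _ ≤ (∑ k ∈ Q, (p k : ℝ) * s k) + (p j : ℝ) * s j := by linarith
    _ = ∑ k ∈ insert j Q, (p k : ℝ) * s k := hins
    _ ≤ ∑ k ∈ S.filter (fun k => Finset.Icc (r k) (d k) ⊆ W), (p k : ℝ) * s k := by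
        apply Finset.sum_le_sum_of_subset_of_nonneg hsubQ
        intro k _ _
        exact mul_nonneg (by positivity) (hs0 k).le

end Core


section Greedy

variable {ι : Type*} [DecidableEq ι]
variable (r d : ι → ℤ) (p : ι → ℕ) (s : ι → ℝ) (S : Finset ι)

/-- Greedy slot selection for `m ≥ 2` hosts: there is an assignment of slots so
that at every slot, either the total load is at most m/2, or removing the last
job placed there brings it down to at most m/2. -/
lemma exists2
    (hs0 : ∀ j, 0 < s j)
    (hlamin : ∀ j k : ι, Finset.Icc (r j) (d j) ⊆ Finset.Icc (r k) (d k) ∨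
      Finset.Icc (r k) (d k) ⊆ Finset.Icc (r j) (d j) ∨
      Disjoint (Finset.Icc (r j) (d j)) (Finset.Icc (r k) (d k)))
    (hrd : ∀ j, r j ≤ d j)
    (lam : ℝ)
    (hslack : ∀ j, (p j : ℝ) ≤ lam * ((d j - r j + 1 : ℤ) : ℝ))
    (m : ℕ) (hm2 : 2 ≤ m)
    (C : ℝ) (hC : 2 * C ≤ (1 - lam) * m)
    (hS : ∀ k : ι, ∑ j ∈ S.filter (fun j => Finset.Icc (r j) (d j) ⊆ Finset.Icc (r k) (d k)),
      (p j : ℝ) * s j ≤ C * ((d k - r k + 1 : ℤ) : ℝ)) :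
    ∀ n : ℕ, ∀ P ⊆ S, P.card = n → ∃ T : ι → Finset ℤ,
      (∀ k ∈ P, T k ⊆ Finset.Icc (r k) (d k) ∧ (T k).card = p k) ∧
      (∀ k, k ∉ P → T k = ∅) ∧
      (∀ t, load s S T t ≤ m/2 ∨ ∃ k, t ∈ T k ∧ load s S T t - s k ≤ m/2) := by
  intro n
  induction n using Nat.strong_induction_on with
  | _ n IH =>
  intro P hPS hcardP
  rcases Finset.eq_empty_or_nonempty P with rfl | hne
  · refine ⟨fun _ => ∅, by simp, by simp, fun t => Or.inl ?_⟩
    have : load s S (fun _ => ∅) t = 0 := by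
      unfold load; simp
    rw [this]; positivity
  · obtain ⟨j, hjP, hjmax⟩ := Finset.exists_max_image P (fun k => d k - r k) hne
    have hjS : j ∈ S := hPS hjP
    have hcard' : (P.erase j).card < n := by
      rw [← hcardP]
      exact Finset.card_erase_lt_of_mem hjP
    obtain ⟨T', hT'1, hT'2, hT'3⟩ := IH (P.erase j).card hcard' (P.erase j)
      (Finset.Subset.trans (Finset.erase_subset j P) hPS) rfl
    -- window of j
    set W := Finset.Icc (r j) (d j) with hWdef
    have hwd : ∀ k ∈ P.erase j, Finset.Icc (r k) (d k) ⊆ W ∨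
        Disjoint (Finset.Icc (r k) (d k)) W := by
      intro k hk
      exact win_cases r d hlamin (hjmax k (Finset.mem_of_mem_erase hk))
    -- mass bound
    have hmass : (∑ t ∈ W, load s S T' t) + (p j : ℝ) * s j
        ≤ C * ((d j - r j + 1 : ℤ) : ℝ) := by
      refine le_trans (mass_le r d p s S hs0 T' (P.erase j)
        (Finset.Subset.trans (Finset.erase_subset j P) hPS)
        (fun k hk => (hT'1 k hk).1) (fun k hk => (hT'1 k hk).2) hT'2 j hjS
        (Finset.notMem_erase j P) hwd) (hS j)
    -- counting
    set elig := W.filter (fun t => load s S T' t ≤ m/2) with helig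
    set blocked := W.filter (fun t => ¬ (load s S T' t ≤ m/2)) with hblocked
    have hcards : elig.card + blocked.card = W.card :=
      Finset.card_filter_add_card_filter_not _
    have hWcard : ((W.card : ℕ) : ℝ) = ((d j - r j + 1 : ℤ) : ℝ) := card_win r d j (hrd j)
    have hblocksum : (blocked.card : ℝ) * (m/2) ≤ ∑ t ∈ W, load s S T' t := by
      have h1 : blocked.card • ((m:ℝ)/2) ≤ ∑ t ∈ blocked, load s S T' t := by
        apply Finset.card_nsmul_le_sum
        intro t ht
        have := (Finset.mem_filter.mp ht).2
        linarith [lt_of_not_ge this]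
      have h2 : ∑ t ∈ blocked, load s S T' t ≤ ∑ t ∈ W, load s S T' t := by
        apply Finset.sum_le_sum_of_subset_of_nonneg (Finset.filter_subset _ _)
        intro t _ _
        exact load_nonneg s S hs0 T' t
      rw [nsmul_eq_mul] at h1
      linarith
    have hNr1 : (1:ℝ) ≤ ((d j - r j + 1 : ℤ) : ℝ) := by
      have := hrd j
      have : (1:ℤ) ≤ d j - r j + 1 := by omega
      exact_mod_cast this
    have hm2R : (2:ℝ) ≤ (m:ℝ) := by exact_mod_cast hm2
    have hpj : p j ≤ elig.card := by
      have key : (p j : ℝ) ≤ (elig.card : ℝ) := by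
        set Nr := ((d j - r j + 1 : ℤ) : ℝ)
        have hec : (elig.card : ℝ) = Nr - (blocked.card : ℝ) := by
          have : (elig.card : ℝ) + (blocked.card : ℝ) = (W.card : ℝ) := by
            exact_mod_cast hcards
          rw [hWcard] at this
          linarith
        rw [hec]
        -- (m/2) * blocked ≤ C*Nr − pj*sj ≤ (m/2)(Nr − pj)
        have h3 : (blocked.card : ℝ) * (m/2) ≤ C * Nr - (p j : ℝ) * s j := by
          linarith [hmass, hblocksum]
        have h4 : C * Nr ≤ (1 - lam) * m / 2 * Nr := by
          have : (0:ℝ) ≤ Nr := by linarith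
          nlinarith
        have h5 : (p j : ℝ) ≤ lam * Nr := hslack j
        have h6 : (0:ℝ) < s j := hs0 j
        nlinarith
      exact_mod_cast key
    obtain ⟨Tj, hTjsub, hTjcard⟩ := Finset.exists_subset_card_eq hpj
    refine ⟨Function.update T' j Tj, ?_, ?_, ?_⟩
    · intro k hk
      by_cases hkj : k = j
      · subst hkj
        rw [Function.update_self]
        exact ⟨Finset.Subset.trans hTjsub (Finset.filter_subset _ _), hTjcard⟩
      · rw [Function.update_of_ne hkj]
        exact hT'1 k (Finset.mem_erase.mpr ⟨hkj, hk⟩)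
    · intro k hk
      have hkj : k ≠ j := fun h => hk (h ▸ hjP)
      rw [Function.update_of_ne hkj]
      exact hT'2 k (fun h => hk (Finset.mem_of_mem_erase h))
    · intro t
      have hTj' : T' j = ∅ := hT'2 j (Finset.notMem_erase j P)
      have hupd := load_update s S T' j hjS hTj' Tj t
      by_cases ht : t ∈ Tj
      · right
        refine ⟨j, by rw [Function.update_self]; exact ht, ?_⟩
        rw [hupd, if_pos ht]
        have htelig : load s S T' t ≤ m/2 :=
          (Finset.mem_filter.mp (hTjsub ht)).2
        linarith
      · rw [hupd, if_neg ht]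
        simp only [add_zero]
        rcases hT'3 t with h | ⟨k, hk1, hk2⟩
        · exact Or.inl h
        · right
          have hkj : k ≠ j := by
            intro h
            rw [h, hTj'] at hk1
            exact absurd hk1 (Finset.notMem_empty t)
          exact ⟨k, by rw [Function.update_of_ne hkj]; exact hk1, hk2⟩

end Greedy


section GreedyOne

variable {ι : Type*} [DecidableEq ι]
variable (r d : ι → ℤ) (p : ι → ℕ) (s : ι → ℝ) (S : Finset ι)

/-- Greedy slot selection for a single host. The extra invariant controls the
number of "light" slots (load in (0,1/2]) inside any laminar-compatible set. -/
lemma exists1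
    (hs0 : ∀ j, 0 < s j) (hs1 : ∀ j, s j ≤ 1) (hp1 : ∀ j, 1 ≤ p j)
    (hlamin : ∀ j k : ι, Finset.Icc (r j) (d j) ⊆ Finset.Icc (r k) (d k) ∨
      Finset.Icc (r k) (d k) ⊆ Finset.Icc (r j) (d j) ∨
      Disjoint (Finset.Icc (r j) (d j)) (Finset.Icc (r k) (d k)))
    (hrd : ∀ j, r j ≤ d j)
    (lam : ℝ) (hlam0 : 0 ≤ lam)
    (hslack : ∀ j, (p j : ℝ) ≤ lam * ((d j - r j + 1 : ℤ) : ℝ))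
    (C : ℝ) (hC : 2 * C ≤ 1 - lam)
    (hS : ∀ k : ι, ∑ j ∈ S.filter (fun j => Finset.Icc (r j) (d j) ⊆ Finset.Icc (r k) (d k)),
      (p j : ℝ) * s j ≤ C * ((d k - r k + 1 : ℤ) : ℝ)) :
    ∀ n : ℕ, ∀ P ⊆ S, P.card = n → ∃ T : ι → Finset ℤ,
      (∀ k ∈ P, T k ⊆ Finset.Icc (r k) (d k) ∧ (T k).card = p k) ∧
      (∀ k, k ∉ P → T k = ∅) ∧
      (∀ t, load s S T t ≤ 1) ∧
      (∀ I : Finset ℤ,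
        (∀ k ∈ P, Finset.Icc (r k) (d k) ⊆ I ∨ Disjoint (Finset.Icc (r k) (d k)) I) →
        ((I.filter (fun t => 0 < load s S T t ∧ load s S T t ≤ 1/2)).card : ℝ)
          ≤ lam * I.card) := by
  intro n
  induction n using Nat.strong_induction_on with
  | _ n IH =>
  intro P hPS hcardP
  rcases Finset.eq_empty_or_nonempty P with rfl | hne
  · have hl0 : ∀ t, load s S (fun _ => ∅) t = 0 := by
      intro t; unfold load; simp
    refine ⟨fun _ => ∅, by simp, by simp, fun t => by rw [hl0]; norm_num, fun I _ => ?_⟩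
    have : I.filter (fun t => 0 < load s S (fun _ => ∅) t ∧ load s S (fun _ => ∅) t ≤ 1/2) = ∅ := by
      apply Finset.filter_false_of_mem
      intro t _
      rw [hl0]
      simp
    rw [this]
    simp only [Finset.card_empty, Nat.cast_zero]
    positivity
  · obtain ⟨j, hjP, hjmax⟩ := Finset.exists_max_image P (fun k => d k - r k) hne
    have hjS : j ∈ S := hPS hjP
    have hcard' : (P.erase j).card < n := by
      rw [← hcardP]; exact Finset.card_erase_lt_of_mem hjP
    obtain ⟨T', hT'1, hT'2, hT'3, hT'4⟩ := IH (P.erase j).card hcard' (P.erase j)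
      (Finset.Subset.trans (Finset.erase_subset j P) hPS) rfl
    set W := Finset.Icc (r j) (d j) with hWdef
    have hwd : ∀ k ∈ P.erase j, Finset.Icc (r k) (d k) ⊆ W ∨
        Disjoint (Finset.Icc (r k) (d k)) W := fun k hk =>
      win_cases r d hlamin (hjmax k (Finset.mem_of_mem_erase hk))
    have hmass : (∑ t ∈ W, load s S T' t) + (p j : ℝ) * s j
        ≤ C * ((d j - r j + 1 : ℤ) : ℝ) :=
      le_trans (mass_le r d p s S hs0 T' (P.erase j)
        (Finset.Subset.trans (Finset.erase_subset j P) hPS)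
        (fun k hk => (hT'1 k hk).1) (fun k hk => (hT'1 k hk).2) hT'2 j hjS
        (Finset.notMem_erase j P) hwd) (hS j)
    set Nr := ((d j - r j + 1 : ℤ) : ℝ) with hNrdef
    have hWcard : ((W.card : ℕ) : ℝ) = Nr := card_win r d j (hrd j)
    have hNr1 : (1:ℝ) ≤ Nr := by
      have h1 : (1:ℤ) ≤ d j - r j + 1 := by have := hrd j; omega
      rw [hNrdef]
      exact_mod_cast h1
    set elig := W.filter (fun t => load s S T' t + s j ≤ 1) with helig
    set blocked := W.filter (fun t => ¬ (load s S T' t + s j ≤ 1)) with hblocked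
    have hcards : elig.card + blocked.card = W.card :=
      Finset.card_filter_add_card_filter_not _
    have hmassW : ∑ t ∈ W, load s S T' t ≤ C * Nr - (p j : ℝ) * s j := by
      rw [hNrdef]; linarith
    have hloadnn : ∀ t, 0 ≤ load s S T' t := load_nonneg s S hs0 T'
    have hlightsW : ((W.filter (fun t => 0 < load s S T' t ∧ load s S T' t ≤ 1/2)).card : ℝ)
        ≤ lam * W.card := hT'4 W hwd
    -- count eligible slots : #elig ≥ p j
    have hpj : p j ≤ elig.card := by
      have key : (p j : ℝ) ≤ (elig.card : ℝ) := by
        have hec : (elig.card : ℝ) = Nr - (blocked.card : ℝ) := by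
          have h0 : (elig.card : ℝ) + (blocked.card : ℝ) = (W.card : ℝ) := by
            exact_mod_cast hcards
          rw [hWcard] at h0; linarith
        rw [hec]
        by_cases hbig : s j ≤ 1/2
        · -- small job : blocked slots have load > 1/2
          have hbl : (blocked.card : ℝ) * (1/2) ≤ ∑ t ∈ W, load s S T' t := by
            have h1 : blocked.card • ((1:ℝ)/2) ≤ ∑ t ∈ blocked, load s S T' t := by
              apply Finset.card_nsmul_le_sum
              intro t ht
              have h2 := (Finset.mem_filter.mp ht).2
              push_neg at h2
              linarith
            have h2 : ∑ t ∈ blocked, load s S T' t ≤ ∑ t ∈ W, load s S T' t :=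
              Finset.sum_le_sum_of_subset_of_nonneg (Finset.filter_subset _ _)
                (fun t _ _ => hloadnn t)
            rw [nsmul_eq_mul] at h1
            linarith
          have h5 := hslack j
          have h6 := hs0 j
          nlinarith [hmassW]
        · -- big job : split blocked into heavy and light slots
          push_neg at hbig
          set H := blocked.filter (fun t => 1/2 < load s S T' t) with hH
          set LB := blocked.filter (fun t => ¬ (1/2 < load s S T' t)) with hLB
          have hHL : H.card + LB.card = blocked.card :=
            Finset.card_filter_add_card_filter_not _
          have hHsum : (H.card : ℝ) * (1/2) ≤ ∑ t ∈ W, load s S T' t := by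
            have h1 : H.card • ((1:ℝ)/2) ≤ ∑ t ∈ H, load s S T' t := by
              apply Finset.card_nsmul_le_sum
              intro t ht
              have h2 := (Finset.mem_filter.mp ht).2
              linarith
            have h2 : ∑ t ∈ H, load s S T' t ≤ ∑ t ∈ W, load s S T' t :=
              Finset.sum_le_sum_of_subset_of_nonneg
                (Finset.Subset.trans (Finset.filter_subset _ _) (Finset.filter_subset _ _))
                (fun t _ _ => hloadnn t)
            rw [nsmul_eq_mul] at h1
            linarith
          have hLBsub : LB ⊆ W.filter (fun t => 0 < load s S T' t ∧ load s S T' t ≤ 1/2) := by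
            intro t ht
            obtain ⟨htb, htl⟩ := Finset.mem_filter.mp ht
            obtain ⟨htW, hte⟩ := Finset.mem_filter.mp htb
            push_neg at hte htl
            refine Finset.mem_filter.mpr ⟨htW, ?_, htl⟩
            have := hs1 j
            linarith
          have hLBcard : (LB.card : ℝ) ≤ lam * Nr := by
            have h1 : (LB.card : ℝ) ≤ ((W.filter (fun t => 0 < load s S T' t ∧
                load s S T' t ≤ 1/2)).card : ℝ) := by
              exact_mod_cast Finset.card_le_card hLBsub
            rw [hWcard] at hlightsW
            linarith
          have hbc : (blocked.card : ℝ) = (H.card : ℝ) + (LB.card : ℝ) := by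
            exact_mod_cast hHL.symm
          have h5 := hslack j
          have h6 := hs0 j
          have h7 : (1:ℝ) ≤ (p j : ℝ) := by exact_mod_cast hp1 j
          nlinarith [hmassW]
      exact_mod_cast key
    -- choose the slots for j
    have hchoice : ∃ Tj : Finset ℤ, Tj ⊆ elig ∧ Tj.card = p j ∧
        (s j ≤ 1/2 → ¬ (p j ≤ (elig.filter (fun t => 0 < load s S T' t)).card) →
          ∃ F0 : Finset ℤ, Tj = (elig.filter (fun t => 0 < load s S T' t)) ∪ F0 ∧
            Disjoint (elig.filter (fun t => 0 < load s S T' t)) F0) ∧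
        (s j ≤ 1/2 → (p j ≤ (elig.filter (fun t => 0 < load s S T' t)).card) →
          Tj ⊆ elig.filter (fun t => 0 < load s S T' t)) := by
      set E1 := elig.filter (fun t => 0 < load s S T' t) with hE1
      set E0 := elig.filter (fun t => ¬ (0 < load s S T' t)) with hE0
      by_cases hq : p j ≤ E1.card
      · obtain ⟨Tj, h1, h2⟩ := Finset.exists_subset_card_eq hq
        exact ⟨Tj, Finset.Subset.trans h1 (Finset.filter_subset _ _), h2,
          fun _ h => absurd hq h, fun _ _ => h1⟩
      · have hE10 : E1.card + E0.card = elig.card :=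
          Finset.card_filter_add_card_filter_not _
        have hle : p j - E1.card ≤ E0.card := by omega
        obtain ⟨F0, hF1, hF2⟩ := Finset.exists_subset_card_eq hle
        have hdisj : Disjoint E1 F0 := by
          apply Finset.disjoint_left.mpr
          intro t ht1 htF
          have := (Finset.mem_filter.mp (hF1 htF)).2
          exact this (Finset.mem_filter.mp ht1).2
        refine ⟨E1 ∪ F0, ?_, ?_, fun _ _ => ⟨F0, rfl, hdisj⟩, fun _ h => absurd h hq⟩
        · apply Finset.union_subset (Finset.filter_subset _ _)
          exact Finset.Subset.trans hF1 (Finset.filter_subset _ _)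
        · rw [Finset.card_union_of_disjoint hdisj, hF2]
          omega
    obtain ⟨Tj, hTjsub, hTjcard, hTjopen, hTjnoopen⟩ := hchoice
    have hTjW : Tj ⊆ W := Finset.Subset.trans hTjsub (Finset.filter_subset _ _)
    have hTj' : T' j = ∅ := hT'2 j (Finset.notMem_erase j P)
    have hupd := load_update s S T' j hjS hTj' Tj
    have hloadeq : ∀ t, t ∉ Tj → load s S (Function.update T' j Tj) t = load s S T' t := by
      intro t ht
      rw [hupd t, if_neg ht, add_zero]
    have hloadin : ∀ t, t ∈ Tj → load s S (Function.update T' j Tj) t = load s S T' t + s j := by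
      intro t ht
      rw [hupd t, if_pos ht]
    refine ⟨Function.update T' j Tj, ?_, ?_, ?_, ?_⟩
    · intro k hk
      by_cases hkj : k = j
      · subst hkj
        rw [Function.update_self]
        exact ⟨hTjW, hTjcard⟩
      · rw [Function.update_of_ne hkj]
        exact hT'1 k (Finset.mem_erase.mpr ⟨hkj, hk⟩)
    · intro k hk
      have hkj : k ≠ j := fun h => hk (h ▸ hjP)
      rw [Function.update_of_ne hkj]
      exact hT'2 k (fun h => hk (Finset.mem_of_mem_erase h))
    · intro t
      by_cases ht : t ∈ Tj
      · rw [hloadin t ht]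
        have := (Finset.mem_filter.mp (hTjsub ht)).2
        linarith
      · rw [hloadeq t ht]
        exact hT'3 t
    · -- the lights invariant
      intro I hcompat
      have hcompat' : ∀ k ∈ P.erase j, Finset.Icc (r k) (d k) ⊆ I ∨
          Disjoint (Finset.Icc (r k) (d k)) I := fun k hk =>
        hcompat k (Finset.mem_of_mem_erase hk)
      rcases hcompat j hjP with hWI | hWI
      · -- W ⊆ I
        have hIdecomp : I.filter (fun t => 0 < load s S (Function.update T' j Tj) t ∧
            load s S (Function.update T' j Tj) t ≤ 1/2)
            ⊆ ((I \ W).filter (fun t => 0 < load s S T' t ∧ load s S T' t ≤ 1/2))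
              ∪ (W.filter (fun t => 0 < load s S (Function.update T' j Tj) t ∧
                  load s S (Function.update T' j Tj) t ≤ 1/2)) := by
          intro t ht
          obtain ⟨htI, htl⟩ := Finset.mem_filter.mp ht
          by_cases htW : t ∈ W
          · exact Finset.mem_union_right _ (Finset.mem_filter.mpr ⟨htW, htl⟩)
          · apply Finset.mem_union_left
            have : t ∉ Tj := fun h => htW (hTjW h)
            rw [hloadeq t this] at htl
            exact Finset.mem_filter.mpr ⟨Finset.mem_sdiff.mpr ⟨htI, htW⟩, htl⟩
        -- compat for I \ W
        have hcompatIW : ∀ k ∈ P.erase j, Finset.Icc (r k) (d k) ⊆ I \ W ∨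
            Disjoint (Finset.Icc (r k) (d k)) (I \ W) := by
          intro k hk
          rcases hwd k hk with h1 | h1
          · right
            exact Finset.disjoint_of_subset_left h1 (Finset.sdiff_disjoint).symm
          · rcases hcompat' k hk with h2 | h2
            · left
              exact Finset.subset_sdiff.mpr ⟨h2, h1⟩
            · right
              exact Finset.disjoint_of_subset_right (Finset.sdiff_subset) h2
        have hIH1 : (((I \ W).filter (fun t => 0 < load s S T' t ∧ load s S T' t ≤ 1/2)).card : ℝ)
            ≤ lam * (I \ W).card := hT'4 (I \ W) hcompatIW
        -- lights inside W after the update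
        have hWlights : ((W.filter (fun t => 0 < load s S (Function.update T' j Tj) t ∧
            load s S (Function.update T' j Tj) t ≤ 1/2)).card : ℝ) ≤ lam * W.card := by
          by_cases hbig : s j ≤ 1/2
          · by_cases hq : p j ≤ (elig.filter (fun t => 0 < load s S T' t)).card
            · -- no new slots opened
              have hsub2 : W.filter (fun t => 0 < load s S (Function.update T' j Tj) t ∧
                  load s S (Function.update T' j Tj) t ≤ 1/2)
                  ⊆ W.filter (fun t => 0 < load s S T' t ∧ load s S T' t ≤ 1/2) := by
                intro t ht
                obtain ⟨htW, ht1, ht2⟩ := Finset.mem_filter.mp ht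
                by_cases htj : t ∈ Tj
                · have h3 := (Finset.mem_filter.mp (hTjnoopen hbig hq htj)).2
                  rw [hloadin t htj] at ht2
                  refine Finset.mem_filter.mpr ⟨htW, h3, ?_⟩
                  have := hs0 j
                  linarith
                · rw [hloadeq t htj] at ht1 ht2
                  exact Finset.mem_filter.mpr ⟨htW, ht1, ht2⟩
              calc ((W.filter _).card : ℝ) ≤ _ := by
                    exact_mod_cast Finset.card_le_card hsub2
                _ ≤ lam * W.card := hlightsW
            · -- slots opened : all pre-lights in W were taken, count ≤ p j
              obtain ⟨F0, hF0, hdisjEF⟩ := hTjopen hbig hq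
              set E1 := elig.filter (fun t => 0 < load s S T' t) with hE1
              have hsub2 : W.filter (fun t => 0 < load s S (Function.update T' j Tj) t ∧
                  load s S (Function.update T' j Tj) t ≤ 1/2)
                  ⊆ (W.filter (fun t => 0 < load s S T' t ∧ load s S T' t ≤ 1/2)) ∪ F0 := by
                intro t ht
                obtain ⟨htW, ht1, ht2⟩ := Finset.mem_filter.mp ht
                by_cases htj : t ∈ Tj
                · rw [hF0] at htj
                  rcases Finset.mem_union.mp htj with htE | htF
                  · apply Finset.mem_union_left
                    have h3 := (Finset.mem_filter.mp htE).2
                    rw [hloadin t (by rw [hF0]; exact Finset.mem_union_left _ htE)] at ht2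
                    refine Finset.mem_filter.mpr ⟨htW, h3, ?_⟩
                    have := hs0 j
                    linarith
                  · exact Finset.mem_union_right _ htF
                · rw [hloadeq t htj] at ht1 ht2
                  exact Finset.mem_union_left _ (Finset.mem_filter.mpr ⟨htW, ht1, ht2⟩)
              have hpre : W.filter (fun t => 0 < load s S T' t ∧ load s S T' t ≤ 1/2) ⊆ E1 := by
                intro t ht
                obtain ⟨htW, ht1, ht2⟩ := Finset.mem_filter.mp ht
                refine Finset.mem_filter.mpr ⟨Finset.mem_filter.mpr ⟨htW, ?_⟩, ht1⟩
                linarith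
              have hcount : (W.filter (fun t => 0 < load s S (Function.update T' j Tj) t ∧
                  load s S (Function.update T' j Tj) t ≤ 1/2)).card ≤ p j := by
                calc (W.filter _).card ≤ ((W.filter (fun t => 0 < load s S T' t ∧
                        load s S T' t ≤ 1/2)) ∪ F0).card := Finset.card_le_card hsub2
                  _ ≤ (W.filter (fun t => 0 < load s S T' t ∧ load s S T' t ≤ 1/2)).card
                        + F0.card := Finset.card_union_le _ _
                  _ ≤ E1.card + F0.card := by
                        have := Finset.card_le_card hpre
                        omega
                  _ = (E1 ∪ F0).card := by
                        rw [Finset.card_union_of_disjoint hdisjEF]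
                  _ = p j := by rw [← hF0]; exact hTjcard
              have h8 : ((W.filter (fun t => 0 < load s S (Function.update T' j Tj) t ∧
                  load s S (Function.update T' j Tj) t ≤ 1/2)).card : ℝ) ≤ (p j : ℝ) := by
                exact_mod_cast hcount
              rw [hWcard]
              exact le_trans h8 (hslack j)
          · -- big job : creates no lights
            push_neg at hbig
            have hsub2 : W.filter (fun t => 0 < load s S (Function.update T' j Tj) t ∧
                load s S (Function.update T' j Tj) t ≤ 1/2)
                ⊆ W.filter (fun t => 0 < load s S T' t ∧ load s S T' t ≤ 1/2) := by
              intro t ht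
              obtain ⟨htW, ht1, ht2⟩ := Finset.mem_filter.mp ht
              by_cases htj : t ∈ Tj
              · exfalso
                rw [hloadin t htj] at ht2
                have := hloadnn t
                linarith
              · rw [hloadeq t htj] at ht1 ht2
                exact Finset.mem_filter.mpr ⟨htW, ht1, ht2⟩
            calc ((W.filter _).card : ℝ) ≤ _ := by
                  exact_mod_cast Finset.card_le_card hsub2
              _ ≤ lam * W.card := hlightsW
        -- put the two parts together
        have hcardsI : ((I \ W).card : ℝ) + (W.card : ℝ) = (I.card : ℝ) := by
          have := Finset.card_sdiff_add_card_eq_card hWI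
          exact_mod_cast this
        calc ((I.filter (fun t => 0 < load s S (Function.update T' j Tj) t ∧
              load s S (Function.update T' j Tj) t ≤ 1/2)).card : ℝ)
            ≤ (((I \ W).filter (fun t => 0 < load s S T' t ∧ load s S T' t ≤ 1/2)).card : ℝ)
              + ((W.filter (fun t => 0 < load s S (Function.update T' j Tj) t ∧
                  load s S (Function.update T' j Tj) t ≤ 1/2)).card : ℝ) := by
              have h1 := Finset.card_le_card hIdecomp
              have h2 := Finset.card_union_le
                ((I \ W).filter (fun t => 0 < load s S T' t ∧ load s S T' t ≤ 1/2))
                (W.filter (fun t => 0 < load s S (Function.update T' j Tj) t ∧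
                  load s S (Function.update T' j Tj) t ≤ 1/2))
              have h3 : (I.filter (fun t => 0 < load s S (Function.update T' j Tj) t ∧
                  load s S (Function.update T' j Tj) t ≤ 1/2)).card
                  ≤ ((I \ W).filter (fun t => 0 < load s S T' t ∧ load s S T' t ≤ 1/2)).card
                    + (W.filter (fun t => 0 < load s S (Function.update T' j Tj) t ∧
                      load s S (Function.update T' j Tj) t ≤ 1/2)).card := le_trans h1 h2
              exact_mod_cast h3
          _ ≤ lam * (I \ W).card + lam * W.card := by linarith [hIH1, hWlights]
          _ = lam * I.card := by rw [← hcardsI]; ring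
      · -- W disjoint from I : nothing changed on I
        have heq : I.filter (fun t => 0 < load s S (Function.update T' j Tj) t ∧
            load s S (Function.update T' j Tj) t ≤ 1/2)
            = I.filter (fun t => 0 < load s S T' t ∧ load s S T' t ≤ 1/2) := by
          apply Finset.filter_congr
          intro t htI
          have htW : t ∉ W := Finset.disjoint_right.mp hWI htI
          have : t ∉ Tj := fun h => htW (hTjW h)
          rw [hloadeq t this]
        rw [heq]
        exact hT'4 I hcompat'

end GreedyOne

end SchedAux

theorem stmt_2 {ι : Type*} [Fintype ι]
    (m : ℕ) (hm : 1 ≤ m)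
    (r d : ι → ℤ) (p : ι → ℕ) (s : ι → ℝ)
    (hrd : ∀ j, r j ≤ d j)
    (hp1 : ∀ j, 1 ≤ p j)
    (hpw : ∀ j, (p j : ℤ) ≤ d j - r j + 1)
    (hs0 : ∀ j, 0 < s j) (hs1 : ∀ j, s j ≤ 1)
    (hlamin : LaminarWindows r d)
    (lam : ℝ) (hlam0 : 0 < lam) (hlam1 : lam < 1)
    (hslack : ∀ j, (p j : ℝ) ≤ lam * ((d j - r j + 1 : ℤ) : ℝ))
    (ω : ℝ) (hω0 : 0 ≤ ω) (hω1 : ω ≤ 1/2 - lam * (1/2 + 1/m))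
    (S : Finset ι)
    (hS : ∀ k : ι,
      ∑ j ∈ S.filter (fun j => Finset.Icc (r j) (d j) ⊆ Finset.Icc (r k) (d k)),
          (p j : ℝ) * s j
        ≤ (ω + lam / m) * m * ((d k - r k + 1 : ℤ) : ℝ)) :
    Schedulable m r d p s S := by
  classical
  set C := (ω + lam / m) * m with hCdef
  have hmR : (0:ℝ) < m := by
    have h1 : (1:ℝ) ≤ m := by exact_mod_cast hm
    linarith
  have hCb : 2 * C ≤ (1 - lam) * m := by
    have hCeq : C = ω * m + lam := by
      rw [hCdef]
      field_simp
    have h2 : ω * m ≤ (1/2 - lam * (1/2 + 1/m)) * m :=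
      mul_le_mul_of_nonneg_right hω1 hmR.le
    have h3 : (1/2 - lam * (1/2 + 1/(m:ℝ))) * m = m/2 - lam * m / 2 - lam := by
      field_simp
      ring
    rw [h3] at h2
    rw [hCeq]
    linarith
  have hlaminR : ∀ j k : ι, Finset.Icc (r j) (d j) ⊆ Finset.Icc (r k) (d k) ∨
      Finset.Icc (r k) (d k) ⊆ Finset.Icc (r j) (d j) ∨
      Disjoint (Finset.Icc (r j) (d j)) (Finset.Icc (r k) (d k)) := hlamin
  by_cases hm2 : 2 ≤ m
  · -- at least two hosts
    obtain ⟨T, hT1, hT2, hT3⟩ := SchedAux.exists2 r d p s S hs0 hlaminR hrd lam hslack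
      m hm2 C hCb hS S.card S (Finset.Subset.refl S) rfl
    have hpack : ∀ t : ℤ, ∃ f : ι → Fin m, ∀ i,
        ∑ a ∈ (S.filter (fun k => t ∈ T k)).filter (fun a => f a = i), s a ≤ 1 := by
      intro t
      apply SchedAux.pack_lemma s m hm2 (S.filter (fun k => t ∈ T k))
        (fun a _ => ⟨hs0 a, hs1 a⟩)
      have hsum : ∑ a ∈ S.filter (fun k => t ∈ T k), s a = SchedAux.load s S T t := by
        unfold SchedAux.load
        rw [Finset.sum_filter]
      rcases hT3 t with h | ⟨k, hk1, hk2⟩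
      · rcases Finset.eq_empty_or_nonempty (S.filter (fun k => t ∈ T k)) with he | ⟨x, hx⟩
        · exact Or.inl he
        · refine Or.inr ⟨x, hx, ?_⟩
          rw [hsum]
          have := hs0 x
          linarith
      · refine Or.inr ⟨k, ?_, ?_⟩
        · refine Finset.mem_filter.mpr ⟨?_, hk1⟩
          by_contra hns
          rw [hT2 k hns] at hk1
          exact absurd hk1 (Finset.notMem_empty t)
        · rw [hsum]
          exact hk2
    choose f hf using hpack
    refine ⟨T, fun j t => f t j, fun j hj => hT1 j hj, ?_⟩
    intro i t
    have heq : S.filter (fun j => t ∈ T j ∧ f t j = i)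
        = (S.filter (fun k => t ∈ T k)).filter (fun a => f t a = i) := by
      rw [Finset.filter_filter]
    rw [heq]
    exact hf t i
  · -- a single host
    have hm1 : m = 1 := by omega
    subst hm1
    have hCb1 : 2 * C ≤ 1 - lam := by
      rw [show ((1:ℕ):ℝ) = (1:ℝ) by norm_num] at hCb
      linarith
    obtain ⟨T, hT1, hT2, hT3, _⟩ := SchedAux.exists1 r d p s S hs0 hs1 hp1 hlaminR hrd
      lam hlam0.le hslack C hCb1 hS S.card S (Finset.Subset.refl S) rfl
    refine ⟨T, fun _ _ => ⟨0, by omega⟩, fun j hj => hT1 j hj, ?_⟩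
    intro i t
    have hsub : S.filter (fun j => t ∈ T j ∧ (⟨0, by omega⟩ : Fin 1) = i)
        ⊆ S.filter (fun j => t ∈ T j) := by
      intro x hx
      obtain ⟨hxS, hx1, _⟩ := Finset.mem_filter.mp hx
      exact Finset.mem_filter.mpr ⟨hxS, hx1⟩
    calc ∑ j ∈ S.filter (fun j => t ∈ T j ∧ (⟨0, by omega⟩ : Fin 1) = i), s j
        ≤ ∑ j ∈ S.filter (fun j => t ∈ T j), s j :=
          Finset.sum_le_sum_of_subset_of_nonneg hsub (fun x _ _ => (hs0 x).le)
      _ = SchedAux.load s S T t := by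
          unfold SchedAux.load
          rw [Finset.sum_filter]
      _ ≤ 1 := hT3 t
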